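/- Let X be a finite set with |X| > 2, let ε > 0, let W be a finite nonempty action set, and let ℓ : W → X → ℝ be a loss function such that for every pair x, x' ∈ X with x ≠ x' there is no w* ∈ W with ℓ w* x ≤ ℓ w x and ℓ w* x' ≤ ℓ w x' for all w ∈ W (all pairwise restrictions of ℓ are non-trivial). Then no ε·d_D-private channel on X is universally ℓ-optimal within the ε·d_D-privacy type (where d_D is the discrete metric). -/

import Mathlib

open Finset

/-- A channel from `X` to `Y`: nonnegative entries and each row sums to 1. -/
def IsChannel {X Y : Type} [Fintype Y] (M : X → Y → ℝ) : Prop :=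
  (∀ x y, 0 ≤ M x y) ∧ ∀ x, ∑ y, M x y = 1

/-- The `ε·d_D`-privacy constraints (discrete metric). -/
def IsPrivateD {X Y : Type} (ε : ℝ) (M : X → Y → ℝ) : Prop :=
  ∀ x x' y, x ≠ x' → M x y ≤ Real.exp ε * M x' y

/-- A prior on `X`. -/
def IsPrior {X : Type} [Fintype X] (π : X → ℝ) : Prop :=
  (∀ x, 0 ≤ π x) ∧ ∑ x, π x = 1

/-- Posterior expected loss `U_ℓ[π⟩M]`. -/
noncomputable def postLoss {X Y W : Type} [Fintype X] [Fintype Y] [Fintype W] [Nonempty W]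
    (π : X → ℝ) (M : X → Y → ℝ) (ℓ : W → X → ℝ) : ℝ :=
  ∑ y, Finset.univ.inf' Finset.univ_nonempty fun w => ∑ x, π x * M x y * ℓ w x

/-- Universal `ℓ`-optimality within the `ε·d_D`-privacy type. -/
def UnivOptimalD {X W Y : Type} [Fintype X] [Fintype W] [Nonempty W] [Fintype Y]
    (ε : ℝ) (M : X → Y → ℝ) (ℓ : W → X → ℝ) : Prop :=
  ∀ (Y' : Type) [Fintype Y'] [Nonempty Y'] (M' : X → Y' → ℝ),
    IsChannel M' → IsPrivateD ε M' →
      ∀ π : X → ℝ, IsPrior π → postLoss π M ℓ ≤ postLoss π M' ℓ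

namespace NoUnivOpt

/-- the line `t ↦ t·ℓ1 w + (1-t)·ℓ2 w`. -/
def gf {W : Type} (ℓ1 ℓ2 : W → ℝ) (t : ℝ) (w : W) : ℝ := t * ℓ1 w + (1 - t) * ℓ2 w

/-- `w` minimizes the pair-loss at parameter `t`. -/
def Mn {W : Type} (ℓ1 ℓ2 : W → ℝ) (t : ℝ) (w : W) : Prop :=
  ∀ w', gf ℓ1 ℓ2 t w ≤ gf ℓ1 ℓ2 t w'

noncomputable def lo (E p : ℝ) : ℝ := p / (p + (1 - p) * E)
noncomputable def hi (E p : ℝ) : ℝ := p * E / (p * E + (1 - p))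

variable {W : Type}

lemma Mn_between {ℓ1 ℓ2 : W → ℝ} {t1 t t2 : ℝ} {w : W}
    (h1 : Mn ℓ1 ℓ2 t1 w) (h2 : Mn ℓ1 ℓ2 t2 w) (ha : t1 ≤ t) (hb : t ≤ t2) :
    Mn ℓ1 ℓ2 t w := by
  rcases eq_or_lt_of_le (ha.trans hb) with heq | hlt
  · have : t = t1 := le_antisymm (heq ▸ hb) ha
    subst this; exact h1
  · intro w'
    have e1 := h1 w'
    have e2 := h2 w'
    simp only [gf] at e1 e2 ⊢
    nlinarith [mul_nonneg (sub_nonneg.2 hb) (sub_nonneg.2 e1),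
      mul_nonneg (sub_nonneg.2 ha) (sub_nonneg.2 e2)]

lemma lines_eq {ℓ1 ℓ2 : W → ℝ} {t t' : ℝ} {w v : W} (hne : t ≠ t')
    (hw : Mn ℓ1 ℓ2 t w) (hw' : Mn ℓ1 ℓ2 t' w)
    (hv : Mn ℓ1 ℓ2 t v) (hv' : Mn ℓ1 ℓ2 t' v) :
    ℓ1 w = ℓ1 v ∧ ℓ2 w = ℓ2 v := by
  have e1 : gf ℓ1 ℓ2 t w = gf ℓ1 ℓ2 t v := le_antisymm (hw v) (hv w)
  have e2 : gf ℓ1 ℓ2 t' w = gf ℓ1 ℓ2 t' v := le_antisymm (hw' v) (hv' w)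
  simp only [gf] at e1 e2
  have ht : t - t' ≠ 0 := sub_ne_zero.2 hne
  have h3 : (t - t') * ((ℓ1 w - ℓ1 v) - (ℓ2 w - ℓ2 v)) = 0 := by linear_combination e1 - e2
  have h4 : (ℓ1 w - ℓ1 v) = (ℓ2 w - ℓ2 v) := by
    rcases mul_eq_zero.1 h3 with h | h
    · exact absurd h ht
    · linarith
  constructor
  · linear_combination e1 + (1 - t) * h4
  · linear_combination e1 - t * h4


section numeric

variable {E p : ℝ} (hE : 1 < E) (hp0 : 0 < p) (hp1 : p < 1)
include hE hp0 hp1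

lemma loD_pos : 0 < p + (1 - p) * E := by nlinarith
lemma hiD_pos : 0 < p * E + (1 - p) := by nlinarith
lemma lo_pos : 0 < lo E p := div_pos hp0 (loD_pos hE hp0 hp1)
lemma lo_lt : lo E p < p := by
  rw [lo, div_lt_iff₀ (loD_pos hE hp0 hp1)]
  nlinarith [mul_pos (mul_pos hp0 (sub_pos.2 hp1)) (sub_pos.2 hE)]
lemma hi_gt : p < hi E p := by
  rw [hi, lt_div_iff₀ (hiD_pos hE hp0 hp1)]
  nlinarith [mul_pos (mul_pos hp0 (sub_pos.2 hp1)) (sub_pos.2 hE)]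
lemma hi_lt_one : hi E p < 1 := by
  rw [hi, div_lt_one (hiD_pos hE hp0 hp1)]; nlinarith
lemma lo_lt_one : lo E p < 1 := (lo_lt hE hp0 hp1).trans hp1
end numeric

lemma pair_lemma [Fintype W] [Nonempty W] (ℓ1 ℓ2 : W → ℝ) {E : ℝ} (hE : 1 < E)
    (hC : ∀ p : ℝ, 0 < p → p < 1 →
      ∃ w : W, Mn ℓ1 ℓ2 (lo E p) w ∧ Mn ℓ1 ℓ2 (hi E p) w) :
    ∃ w : W, (∀ w', ℓ1 w ≤ ℓ1 w') ∧ (∀ w', ℓ2 w ≤ ℓ2 w') := by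
  classical
  set S : W → Set ℝ := fun w => Set.Icc (0:ℝ) 1 ∩ {t | Mn ℓ1 ℓ2 t w} with hS
  have hgcont : ∀ w : W, Continuous fun t : ℝ => gf ℓ1 ℓ2 t w := by
    intro w; unfold gf; fun_prop
  have hSclosed : ∀ w, IsClosed {t | Mn ℓ1 ℓ2 t w} := by
    intro w
    have : {t | Mn ℓ1 ℓ2 t w} = ⋂ w', {t : ℝ | gf ℓ1 ℓ2 t w ≤ gf ℓ1 ℓ2 t w'} := by
      ext t; simp [Mn, Set.mem_iInter]
    rw [this]
    exact isClosed_iInter fun w' => isClosed_le (hgcont w) (hgcont w')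
  have hScompact : ∀ w, IsCompact (S w) :=
    fun w => isCompact_Icc.inter_right (hSclosed w)
  -- the union of minimizing sets of "bad" actions (not minimizing at 1)
  set U : Set ℝ := ⋃ w ∈ {w : W | ¬ Mn ℓ1 ℓ2 1 w}, S w with hU
  have hUcompact : IsCompact U :=
    (Set.toFinite _).isCompact_biUnion fun w _ => hScompact w
  set d : ℝ := if hUne : U.Nonempty then sSup U else 0 with hd
  have hdU : ∀ w, ∀ t ∈ S w, d < t → Mn ℓ1 ℓ2 1 w := by
    intro w t htS hdt
    by_contra hbad
    have htU : t ∈ U := Set.mem_biUnion hbad htS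
    have hUne : U.Nonempty := ⟨t, htU⟩
    have : t ≤ sSup U := le_csSup hUcompact.bddAbove htU
    rw [hd, dif_pos hUne] at hdt
    linarith
  have hd0 : 0 ≤ d := by
    rw [hd]; split_ifs with hUne
    · obtain ⟨w, -, hmem⟩ := Set.mem_iUnion₂.1 (hUcompact.sSup_mem hUne)
      exact hmem.1.1
    · exact le_rfl
  have hd1 : d < 1 := by
    rw [hd]; split_ifs with hUne
    · obtain ⟨w, hwbad, hmem⟩ := Set.mem_iUnion₂.1 (hUcompact.sSup_mem hUne)
      rcases lt_or_eq_of_le hmem.1.2 with h | h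
      · exact h
      · exact absurd (h ▸ hmem.2) hwbad
    · norm_num
  -- choose p₁ with d < lo E p₁
  have hexP : ∃ p : ℝ, 0 < p ∧ p < 1 ∧ d < lo E p := by
    set Dq : ℝ := d * E + 1 - d with hDq
    have hDqpos : 0 < Dq := by nlinarith
    set q : ℝ := d * E / Dq with hq
    have hq1 : q < 1 := by rw [hq, div_lt_one hDqpos]; nlinarith
    have hq0 : 0 ≤ q := div_nonneg (by nlinarith) hDqpos.le
    refine ⟨(q + 1) / 2, by linarith, by linarith, ?_⟩
    have hqq : q * Dq = d * E := div_mul_cancel₀ _ hDqpos.ne'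
    set p := (q + 1) / 2 with hp
    have hp0 : 0 < p := by rw [hp]; linarith
    have hp1 : p < 1 := by rw [hp]; linarith
    have hqp : q < p := by rw [hp]; linarith
    rw [lo, lt_div_iff₀ (loD_pos hE hp0 hp1)]
    nlinarith [mul_lt_mul_of_pos_right hqp hDqpos]
  obtain ⟨p₁, hp₁0, hp₁1, hdlo₁⟩ := hexP
  obtain ⟨w₁, hw₁lo, hw₁hi⟩ := hC p₁ hp₁0 hp₁1
  have hlo₁mem : lo E p₁ ∈ S w₁ :=
    ⟨⟨(lo_pos hE hp₁0 hp₁1).le, (lo_lt_one hE hp₁0 hp₁1).le⟩, hw₁lo⟩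
  have hw₁1 : Mn ℓ1 ℓ2 1 w₁ := hdU w₁ _ hlo₁mem hdlo₁
  -- the set of points minimized by some action that also minimizes at 1
  set T : Set ℝ := ⋃ w ∈ {w : W | Mn ℓ1 ℓ2 1 w}, S w with hT
  have hTcompact : IsCompact T :=
    (Set.toFinite _).isCompact_biUnion fun w _ => hScompact w
  have hTne : T.Nonempty := ⟨lo E p₁, Set.mem_biUnion hw₁1 hlo₁mem⟩
  set t₀ : ℝ := sInf T with ht₀
  have ht₀T : t₀ ∈ T := hTcompact.sInf_mem hTne
  obtain ⟨ws, hws1, hwsS⟩ := Set.mem_iUnion₂.1 ht₀T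
  have ht₀0 : 0 ≤ t₀ := hwsS.1.1
  have ht₀le : t₀ ≤ lo E p₁ := csInf_le hTcompact.bddBelow (Set.mem_biUnion hw₁1 hlo₁mem)
  have ht₀1 : t₀ < 1 := lt_of_le_of_lt ht₀le (lo_lt_one hE hp₁0 hp₁1)
  rcases eq_or_lt_of_le ht₀0 with h0 | h0
  · -- t₀ = 0 : done
    refine ⟨ws, ?_, ?_⟩
    · intro w'
      have := hws1 w'
      simp only [gf] at this; linarith
    · intro w'
      have h00 : Mn ℓ1 ℓ2 0 ws := h0 ▸ hwsS.2
      have := h00 w'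
      simp only [gf] at this; linarith
  · -- 0 < t₀ : derive contradiction
    exfalso
    obtain ⟨w₂, h₂lo, h₂hi⟩ := hC t₀ h0 ht₀1
    set t' : ℝ := min (hi E t₀) 1 with ht'
    have ht'gt : t₀ < t' := lt_min (hi_gt hE h0 ht₀1) ht₀1
    have hlolt : lo E t₀ < t₀ := lo_lt hE h0 ht₀1
    have h₂t₀ : Mn ℓ1 ℓ2 t₀ w₂ :=
      Mn_between h₂lo h₂hi hlolt.le (hi_gt hE h0 ht₀1).le
    have h₂t' : Mn ℓ1 ℓ2 t' w₂ :=
      Mn_between h₂lo h₂hi (hlolt.trans ht'gt).le (min_le_left _ _)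
    have hst' : Mn ℓ1 ℓ2 t' ws :=
      Mn_between hwsS.2 hws1 ht'gt.le (min_le_right _ _)
    have heq := lines_eq (ne_of_lt ht'gt).symm h₂t' h₂t₀ hst' hwsS.2
    have h₂1 : Mn ℓ1 ℓ2 1 w₂ := by
      intro w'
      simp only [gf, heq.1, heq.2]
      exact hws1 w'
    have hloT : lo E t₀ ∈ T := by
      refine Set.mem_biUnion h₂1 ⟨⟨(lo_pos hE h0 ht₀1).le, (lo_lt_one hE h0 ht₀1).le⟩, h₂lo⟩
    have : t₀ ≤ lo E t₀ := csInf_le hTcompact.bddBelow hloT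
    linarith




lemma sum_pair {X : Type} [Fintype X] [DecidableEq X] {x1 x2 : X} (h : x1 ≠ x2) (p q : ℝ) (f : X → ℝ) :
    ∑ x, (if x = x1 then p else if x = x2 then q else 0) * f x = p * f x1 + q * f x2 := by
  classical
  have e : ∀ x ∈ (univ : Finset X), (if x = x1 then p else if x = x2 then q else 0) * f x
      = (if x = x1 then p * f x1 else 0) + (if x = x2 then q * f x2 else 0) := by
    intro x _
    by_cases h1 : x = x1
    · subst h1; simp [h]
    · by_cases h2 : x = x2 <;> simp [h1, h2, h.symm]
  rw [Finset.sum_congr rfl e, Finset.sum_add_distrib]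
  simp

lemma inf'_mul_left {W : Type} [Fintype W] (H : (univ : Finset W).Nonempty) {c : ℝ}
    (hc : 0 ≤ c) (f : W → ℝ) :
    univ.inf' H (fun w => c * f w) = c * univ.inf' H f := by
  apply le_antisymm
  · obtain ⟨w, hw, hfw⟩ := Finset.exists_mem_eq_inf' H f
    calc univ.inf' H (fun w => c * f w) ≤ c * f w := Finset.inf'_le _ hw
    _ = c * univ.inf' H f := by rw [hfw]
  · exact Finset.le_inf' _ _ fun w hw => mul_le_mul_of_nonneg_left (Finset.inf'_le _ hw) hc


lemma gf_hi_eq {W : Type} (ℓ1 ℓ2 : W → ℝ) {E p : ℝ} (hE : 0 < E)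
    (hp0 : 0 < p) (hp1 : p < 1) (v : W) :
    gf ℓ1 ℓ2 (hi E p) v = (p * E * ℓ1 v + (1 - p) * ℓ2 v) / (p * E + (1 - p)) := by
  have hD : (0:ℝ) < p * E + (1 - p) := by nlinarith
  simp only [gf, hi]
  field_simp
  ring

lemma gf_lo_eq {W : Type} (ℓ1 ℓ2 : W → ℝ) {E p : ℝ} (hE : 0 < E)
    (hp0 : 0 < p) (hp1 : p < 1) (v : W) :
    gf ℓ1 ℓ2 (lo E p) v = (p * ℓ1 v + (1 - p) * E * ℓ2 v) / (p + (1 - p) * E) := by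
  have hD : (0:ℝ) < p + (1 - p) * E := by nlinarith
  simp only [gf, lo]
  field_simp
  ring

end NoUnivOpt

open NoUnivOpt

/-- If all pairwise restrictions of `ℓ` are non-trivial then no
`ε·d_D`-private channel on `|X| > 2` inputs is universally `ℓ`-optimal. -/
theorem no_universally_optimal_pairwise_nontrivial_discrete
    {X W : Type} [Fintype X] [Nonempty X] [Fintype W] [Nonempty W]
    (hcard : 2 < Fintype.card X) (ε : ℝ) (hε : 0 < ε)
    (ℓ : W → X → ℝ)
    (hnt : ∀ x x' : X, x ≠ x' →
      ¬ ∃ wstar : W, ∀ w : W, ℓ wstar x ≤ ℓ w x ∧ ℓ wstar x' ≤ ℓ w x') :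
    ¬ ∃ (Y : Type) (_ : Fintype Y) (_ : Nonempty Y) (M : X → Y → ℝ),
        IsChannel M ∧ IsPrivateD ε M ∧ UnivOptimalD ε M ℓ := by
  classical
  rintro ⟨Y, _, _, M, hM, hpriv, hopt⟩
  set E := Real.exp ε with hEdef
  clear_value E
  have hE1 : 1 < E := hEdef ▸ Real.one_lt_exp_iff.2 hε
  have hE0 : 0 < E := lt_trans one_pos hE1
  have hpriv' : ∀ x x' y, x ≠ x' → M x y ≤ E * M x' y := by
    intro x x' y h; rw [hEdef]; exact hpriv x x' y h
  obtain ⟨xa, xb, xc, hab, hac, hbc⟩ := Fintype.two_lt_card_iff.1 hcard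
  -- find a strictly positive column
  have hexy : ∃ y, 0 < M xa y := by
    by_contra hno; push_neg at hno
    have hz : ∀ y, M xa y = 0 := fun y => le_antisymm (hno y) (hM.1 xa y)
    have h1 := hM.2 xa
    rw [Finset.sum_congr rfl fun y _ => hz y] at h1
    simp at h1
  obtain ⟨y₀, hy₀⟩ := hexy
  have hpos : ∀ x, 0 < M x y₀ := by
    intro x
    by_cases hx : x = xa
    · subst hx; exact hy₀
    · have h1 := hpriv' xa x y₀ (Ne.symm hx)
      nlinarith [hM.1 x y₀]
  -- find a strictly interior pair
  have key : ∃ u v : X, u ≠ v ∧ M u y₀ < E * M v y₀ ∧ M v y₀ < E * M u y₀ := by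
    by_contra hno; push_neg at hno
    have heq : ∀ u v : X, u ≠ v → M u y₀ = E * M v y₀ ∨ M v y₀ = E * M u y₀ := by
      intro u v huv
      rcases lt_or_eq_of_le (hpriv' u v y₀ huv) with h | h
      · right; exact le_antisymm (hpriv' v u y₀ huv.symm) (hno u v huv h)
      · left; exact h
    rcases heq xa xb hab with h1 | h1 <;> rcases heq xb xc hbc with h2 | h2 <;>
        rcases heq xa xc hac with h3 | h3 <;>
      nlinarith [hpos xa, hpos xb, hpos xc, hE1, hE0,
        mul_pos (mul_pos hE0 (hpos xc)) (sub_pos.2 hE1),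
        mul_pos (mul_pos hE0 (hpos xa)) (sub_pos.2 hE1),
        mul_pos (mul_pos hE0 (hpos xb)) (sub_pos.2 hE1),
        mul_pos (mul_pos (mul_pos hE0 hE0) (hpos xa)) (sub_pos.2 hE1),
        mul_pos (mul_pos (mul_pos hE0 hE0) (hpos xc)) (sub_pos.2 hE1)]
  obtain ⟨x1, x2, h12, hi1, hi2⟩ := key
  have hE2 : (0:ℝ) < E ^ 2 - 1 := by nlinarith
  set c : ℝ := 1 / (1 + E) with hcdef
  clear_value c
  have h1E : (0:ℝ) < 1 + E := by linarith
  have hc0 : (0:ℝ) < c := by rw [hcdef]; positivity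
  set ℓ1 : W → ℝ := fun w => ℓ w x1 with hℓ1
  set ℓ2 : W → ℝ := fun w => ℓ w x2 with hℓ2
  clear_value ℓ1 ℓ2
  have hC : ∀ p : ℝ, 0 < p → p < 1 →
      ∃ w : W, Mn ℓ1 ℓ2 (lo E p) w ∧ Mn ℓ1 ℓ2 (hi E p) w := by
    intro p hp0 hp1
    set q : ℝ := 1 - p with hqdef
    clear_value q
    have hq0 : (0:ℝ) < q := by rw [hqdef]; linarith
    set π : X → ℝ := fun x => if x = x1 then p else if x = x2 then q else 0 with hπdef
    clear_value π
    have hπ : IsPrior π := by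
      constructor
      · intro x; rw [hπdef]; dsimp only; split_ifs <;> linarith
      · have h := sum_pair h12 p q (fun _ => (1:ℝ))
        simp only [mul_one] at h
        rw [hπdef]; exact h.trans (by rw [hqdef]; ring)
    set R : X → Bool → ℝ := fun x b =>
      if x = x1 then (if b then E * c else c) else (if b then c else E * c) with hRdef
    clear_value R
    have hR11 : R x1 true = E * c := by rw [hRdef]; simp
    have hR10 : R x1 false = c := by rw [hRdef]; simp
    have hR21 : R x2 true = c := by rw [hRdef]; simp [h12.symm]
    have hR20 : R x2 false = E * c := by rw [hRdef]; simp [h12.symm]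
    have hRval : ∀ (b : Bool) (v : X), R v b = c ∨ R v b = E * c := by
      intro b v; rw [hRdef]; dsimp only; split_ifs <;> simp
    have hRpos : ∀ (v : X) (b : Bool), 0 < R v b := by
      intro v b; rcases hRval b v with h | h <;> rw [h] <;> positivity
    have hRchan : IsChannel R := by
      constructor
      · intro x y; exact (hRpos x y).le
      · intro x
        rw [Fintype.sum_bool, hRdef]
        by_cases hx : x = x1 <;>
          simp only [hx, if_pos rfl, if_neg, if_true, if_false, reduceIte, Bool.false_eq_true] <;>
          (rw [hcdef]; field_simp; try ring)
    have hRpriv : IsPrivateD ε R := by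
      intro x x' y hxx'
      rw [← hEdef]
      rcases hRval y x with h | h <;> rcases hRval y x' with h' | h' <;>
        rw [h, h'] <;>
        linarith [mul_pos hc0 (sub_pos.2 hE1), mul_pos (mul_pos hE0 hc0) (sub_pos.2 hE1)]
    have hcomp : postLoss π M ℓ ≤ postLoss π R ℓ := hopt Bool R hRchan hRpriv π hπ
    -- the two benchmark values
    set F : ℝ := univ.inf' univ_nonempty (fun w => p * E * ℓ1 w + q * ℓ2 w) with hF
    set G : ℝ := univ.inf' univ_nonempty (fun w => p * ℓ1 w + q * E * ℓ2 w) with hG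
    clear_value F G
    -- value of the comparison channel
    have hRpost : postLoss π R ℓ = c * F + c * G := by
      rw [postLoss, Fintype.sum_bool]
      have htrue : (fun w => ∑ x, π x * R x true * ℓ w x)
          = fun w => c * (p * E * ℓ1 w + q * ℓ2 w) := by
        funext w
        have h1 : ∀ x, π x * R x true * ℓ w x = π x * (R x true * ℓ w x) :=
          fun x => mul_assoc _ _ _
        rw [Finset.sum_congr rfl fun x _ => h1 x, hπdef]
        rw [sum_pair h12 p q (fun x => R x true * ℓ w x), hR11, hR21, hℓ1, hℓ2]
        ring
      have hfalse : (fun w => ∑ x, π x * R x false * ℓ w x)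
          = fun w => c * (p * ℓ1 w + q * E * ℓ2 w) := by
        funext w
        have h1 : ∀ x, π x * R x false * ℓ w x = π x * (R x false * ℓ w x) :=
          fun x => mul_assoc _ _ _
        rw [Finset.sum_congr rfl fun x _ => h1 x, hπdef]
        rw [sum_pair h12 p q (fun x => R x false * ℓ w x), hR10, hR20, hℓ1, hℓ2]
        ring
      rw [htrue, hfalse, inf'_mul_left _ hc0.le, inf'_mul_left _ hc0.le, hF, hG]
    -- per-column values of M
    set colval : Y → ℝ := fun y => univ.inf' univ_nonempty
        (fun w => p * (M x1 y * ℓ1 w) + q * (M x2 y * ℓ2 w)) with hcolval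
    clear_value colval
    have hMpost : postLoss π M ℓ = ∑ y, colval y := by
      rw [postLoss]
      refine Finset.sum_congr rfl fun y _ => ?_
      rw [hcolval]
      congr 1
      funext w
      have h1 : ∀ x, π x * M x y * ℓ w x = π x * (M x y * ℓ w x) :=
        fun x => mul_assoc _ _ _
      rw [Finset.sum_congr rfl fun x _ => h1 x, hπdef]
      rw [sum_pair h12 p q (fun x => M x y * ℓ w x), hℓ1, hℓ2]
    -- decomposition coefficients
    set α : Y → ℝ := fun y => (E * M x1 y - M x2 y) / (E ^ 2 - 1) with hα
    set β : Y → ℝ := fun y => (E * M x2 y - M x1 y) / (E ^ 2 - 1) with hβ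
    clear_value α β
    have hα0 : ∀ y, 0 ≤ α y := by
      intro y; rw [hα]; dsimp only
      exact div_nonneg (by linarith [hpriv' x2 x1 y h12.symm]) hE2.le
    have hβ0 : ∀ y, 0 ≤ β y := by
      intro y; rw [hβ]; dsimp only
      exact div_nonneg (by linarith [hpriv' x1 x2 y h12]) hE2.le
    have hM1 : ∀ y, M x1 y = α y * E + β y := by
      intro y; rw [hα, hβ]; dsimp only; field_simp; try ring
    have hM2 : ∀ y, M x2 y = α y + β y * E := by
      intro y; rw [hα, hβ]; dsimp only; field_simp; try ring
    have hcol : ∀ y, α y * F + β y * G ≤ colval y := by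
      intro y
      rw [hcolval]
      refine Finset.le_inf' _ _ fun w _ => ?_
      have hFw : F ≤ p * E * ℓ1 w + q * ℓ2 w := by
        rw [hF]; exact Finset.inf'_le _ (mem_univ w)
      have hGw : G ≤ p * ℓ1 w + q * E * ℓ2 w := by
        rw [hG]; exact Finset.inf'_le _ (mem_univ w)
      calc α y * F + β y * G
          ≤ α y * (p * E * ℓ1 w + q * ℓ2 w) + β y * (p * ℓ1 w + q * E * ℓ2 w) :=
            add_le_add (mul_le_mul_of_nonneg_left hFw (hα0 y))
              (mul_le_mul_of_nonneg_left hGw (hβ0 y))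
        _ = p * (M x1 y * ℓ1 w) + q * (M x2 y * ℓ2 w) := by rw [hM1 y, hM2 y]; ring
    have hsumα : ∑ y, α y = c := by
      simp only [hα]
      rw [← Finset.sum_div, Finset.sum_sub_distrib, ← Finset.mul_sum, hM.2 x1, hM.2 x2,
        hcdef, div_eq_div_iff hE2.ne' h1E.ne']
      ring
    have hsumβ : ∑ y, β y = c := by
      simp only [hβ]
      rw [← Finset.sum_div, Finset.sum_sub_distrib, ← Finset.mul_sum, hM.2 x2, hM.2 x1,
        hcdef, div_eq_div_iff hE2.ne' h1E.ne']
      ring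
    have htot : ∑ y, (α y * F + β y * G) = c * F + c * G := by
      rw [Finset.sum_add_distrib, ← Finset.sum_mul, ← Finset.sum_mul, hsumα, hsumβ]
    -- equality must hold at column y₀
    have heq₀ : colval y₀ ≤ α y₀ * F + β y₀ * G := by
      by_contra hlt; push_neg at hlt
      have hstrict : ∑ y, (α y * F + β y * G) < ∑ y, colval y :=
        Finset.sum_lt_sum (fun y _ => hcol y) ⟨y₀, mem_univ _, hlt⟩
      rw [htot] at hstrict
      rw [hMpost, hRpost] at hcomp
      linarith
    -- extract a common minimizer at column y₀
    obtain ⟨w0, hw0mem, hw0⟩ := Finset.exists_mem_eq_inf'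
      (Finset.univ_nonempty (α := W))
      (fun w => p * (M x1 y₀ * ℓ1 w) + q * (M x2 y₀ * ℓ2 w))
    have hαp : 0 < α y₀ := by
      rw [hα]; dsimp only; exact div_pos (by linarith) hE2
    have hβp : 0 < β y₀ := by
      rw [hβ]; dsimp only; exact div_pos (by linarith) hE2
    have hFw0 : F ≤ p * E * ℓ1 w0 + q * ℓ2 w0 := by
      rw [hF]; exact Finset.inf'_le _ (mem_univ w0)
    have hGw0 : G ≤ p * ℓ1 w0 + q * E * ℓ2 w0 := by
      rw [hG]; exact Finset.inf'_le _ (mem_univ w0)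
    have hsum0 : α y₀ * (p * E * ℓ1 w0 + q * ℓ2 w0) + β y₀ * (p * ℓ1 w0 + q * E * ℓ2 w0)
        ≤ α y₀ * F + β y₀ * G := by
      have hcv : colval y₀ = p * (M x1 y₀ * ℓ1 w0) + q * (M x2 y₀ * ℓ2 w0) := by
        rw [hcolval]; exact hw0
      have hrw : p * (M x1 y₀ * ℓ1 w0) + q * (M x2 y₀ * ℓ2 w0)
          = α y₀ * (p * E * ℓ1 w0 + q * ℓ2 w0) + β y₀ * (p * ℓ1 w0 + q * E * ℓ2 w0) := by
        rw [hM1 y₀, hM2 y₀]; ring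
      rw [← hrw, ← hcv]; exact heq₀
    have hFeq : p * E * ℓ1 w0 + q * ℓ2 w0 ≤ F := by
      by_contra hcon; push_neg at hcon
      have h1 : α y₀ * F < α y₀ * (p * E * ℓ1 w0 + q * ℓ2 w0) :=
        mul_lt_mul_of_pos_left hcon hαp
      have h2 : β y₀ * G ≤ β y₀ * (p * ℓ1 w0 + q * E * ℓ2 w0) :=
        mul_le_mul_of_nonneg_left hGw0 hβp.le
      linarith
    have hGeq : p * ℓ1 w0 + q * E * ℓ2 w0 ≤ G := by
      by_contra hcon; push_neg at hcon
      have h1 : β y₀ * G < β y₀ * (p * ℓ1 w0 + q * E * ℓ2 w0) :=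
        mul_lt_mul_of_pos_left hcon hβp
      have h2 : α y₀ * F ≤ α y₀ * (p * E * ℓ1 w0 + q * ℓ2 w0) :=
        mul_le_mul_of_nonneg_left hFw0 hαp.le
      linarith
    -- translate to minimality of gf at lo and hi
    have hDhi : (0:ℝ) < p * E + q := add_pos (mul_pos hp0 hE0) hq0
    have hDlo : (0:ℝ) < p + q * E := add_pos hp0 (mul_pos hq0 hE0)
    have hgf_hi : ∀ v : W, gf ℓ1 ℓ2 (hi E p) v
        = (p * E * ℓ1 v + q * ℓ2 v) / (p * E + q) := by
      intro v
      rw [hqdef]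
      exact gf_hi_eq ℓ1 ℓ2 hE0 hp0 hp1 v
    have hgf_lo : ∀ v : W, gf ℓ1 ℓ2 (lo E p) v
        = (p * ℓ1 v + q * E * ℓ2 v) / (p + q * E) := by
      intro v
      rw [hqdef]
      exact gf_lo_eq ℓ1 ℓ2 hE0 hp0 hp1 v
    refine ⟨w0, ?_, ?_⟩
    · intro w'
      rw [hgf_lo w0, hgf_lo w', div_le_div_iff₀ hDlo hDlo]
      have hle : p * ℓ1 w0 + q * E * ℓ2 w0 ≤ p * ℓ1 w' + q * E * ℓ2 w' :=
        le_trans hGeq (by rw [hG]; exact Finset.inf'_le _ (mem_univ w'))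
      exact mul_le_mul_of_nonneg_right hle hDlo.le
    · intro w'
      rw [hgf_hi w0, hgf_hi w', div_le_div_iff₀ hDhi hDhi]
      have hle : p * E * ℓ1 w0 + q * ℓ2 w0 ≤ p * E * ℓ1 w' + q * ℓ2 w' :=
        le_trans hFeq (by rw [hF]; exact Finset.inf'_le _ (mem_univ w'))
      exact mul_le_mul_of_nonneg_right hle hDhi.le
  obtain ⟨ws, hws1, hws2⟩ := pair_lemma ℓ1 ℓ2 hE1 hC
  simp only [hℓ1, hℓ2] at hws1 hws2
  exact hnt x1 x2 h12 ⟨ws, fun w => ⟨hws1 w, hws2 w⟩⟩
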